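/- Let A be an abelian category and (U,V) a t-structure on D^b(A) with heart H(U) = U ∩ V. The following conditions are equivalent: (1) for all A,B ∈ H(U), all n ≥ 2, and every morphism f: A → B[n] in D^b(A), there is an epimorphism C → A in H(U) such that the composite C → A → B[n] is zero; (2) for all A,B ∈ H(U), all n ≥ 2, and every morphism f: A → B[n], there is a monomorphism B → C in H(U) such that the composite A → B[n] → C[n] is zero; (3) for all A,B ∈ H(U), all n ≥ 2, and every morphism f: A → B[n], there is a sequence of morphisms A = A_0 → A_1[1] → A_2[2] → ⋯ → A_n[n] = B[n] with each A_i ∈ H(U) that composes to f. -/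

import Mathlib

/-!
Common definitions for formalizing statements from
"Derived equivalences for hereditary algebras: the role of the Serre functor".
-/

noncomputable section

open CategoryTheory CategoryTheory.Limits CategoryTheory.Pretriangulated

universe w₁ v₁ u₁ w v u

namespace Paper

variable (D : Type u) [Category.{v} D]

/-- An object of a preadditive category is indecomposable if it is nonzero and any
biproduct decomposition `X ≅ Y ⊞ Z` has `Y = 0` or `Z = 0` (expressed elementarily). -/
def IndecomposableObj [Preadditive D] (X : D) : Prop :=
  ¬ IsZero X ∧
    ∀ (Y Z : D) (i : Y ⟶ X) (p : X ⟶ Y) (j : Z ⟶ X) (q : X ⟶ Z),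
      i ≫ p = 𝟙 Y → j ≫ q = 𝟙 Z → i ≫ q = 0 → j ≫ p = 0 → p ≫ i + q ≫ j = 𝟙 X →
        IsZero Y ∨ IsZero Z

/-- A morphism `f : A ⟶ C` is right minimal if any `h : A ⟶ A` with `h ≫ f = f`
is an automorphism. -/
def RightMinimal {A C : D} (f : A ⟶ C) : Prop :=
  ∀ h : A ⟶ A, h ≫ f = f → IsIso h

/-- The equivalence relation `f ∼_C g` on morphisms with target `C`. -/
def EquivOver {A B C : D} (f : A ⟶ C) (g : B ⟶ C) : Prop :=
  (∃ h₁ : A ⟶ B, h₁ ≫ g = f) ∧ (∃ h₂ : B ⟶ A, h₂ ≫ f = g)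

section Serre

variable (k : Type u₁) [Field k] [Preadditive D] [CategoryTheory.Linear k D]

/-- A Serre functor on a `k`-linear category `D`: an autoequivalence `F` together with
isomorphisms `Hom(X,Y) ≅ Hom(Y, F X)*`, natural in `X` and `Y`. -/
structure SerreFunctor where
  F : D ⥤ D
  isEquivalence : F.IsEquivalence
  η : ∀ X Y : D, (X ⟶ Y) ≃ₗ[k] Module.Dual k (Y ⟶ F.obj X)
  naturality_left : ∀ ⦃X' X Y : D⦄ (u : X' ⟶ X) (f : X ⟶ Y) (g : Y ⟶ F.obj X'),
    η X' Y (u ≫ f) g = η X Y f (g ≫ F.map u)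
  naturality_right : ∀ ⦃X Y Y' : D⦄ (f : X ⟶ Y) (v : Y ⟶ Y') (g : Y' ⟶ F.obj X),
    η X Y' (f ≫ v) g = η X Y f (v ≫ g)

/-- A Serre functor on the strictly full subcategory of `D` whose objects are `S`;
the Hom-spaces are the ambient ones. -/
structure SerreFunctorOn (S : Set D) where
  F : ObjectProperty.FullSubcategory (· ∈ S) ⥤ ObjectProperty.FullSubcategory (· ∈ S)
  isEquivalence : F.IsEquivalence
  η : ∀ X Y : ObjectProperty.FullSubcategory (· ∈ S),
    (X.obj ⟶ Y.obj) ≃ₗ[k] Module.Dual k (Y.obj ⟶ (F.obj X).obj)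
  naturality_left : ∀ ⦃X' X Y : ObjectProperty.FullSubcategory (· ∈ S)⦄ (u : X' ⟶ X) (f : X.obj ⟶ Y.obj)
      (g : Y.obj ⟶ (F.obj X').obj),
    η X' Y (u.hom ≫ f) g
      = η X Y f (g ≫ (F.map u).hom)
  naturality_right : ∀ ⦃X Y Y' : ObjectProperty.FullSubcategory (· ∈ S)⦄ (f : X.obj ⟶ Y.obj) (v : Y ⟶ Y')
      (g : Y'.obj ⟶ (F.obj X).obj),
    η X Y' (f ≫ v.hom) g = η X Y f (v.hom ≫ g)

end Serre

section Triangulated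

variable [HasZeroObject D] [Preadditive D] [HasShift D ℤ]
  [∀ n : ℤ, (shiftFunctor D n).Additive] [Pretriangulated D]

/-- A t-structure on the strictly full (pretriangulated) subcategory of `D` with objects `S`:
a pair `(U, V)` of strictly full subcategories with `U[1] ⊆ U`, `V ⊆ V[1]`,
`Hom(U[1], V) = 0`, and truncation triangles for every object of `S`. -/
structure TStructureOn (S : Set D) where
  U : Set D
  V : Set D
  U_subset : U ⊆ S
  V_subset : V ⊆ S
  U_iso : ∀ ⦃X Y : D⦄, (X ≅ Y) → X ∈ U → Y ∈ U
  V_iso : ∀ ⦃X Y : D⦄, (X ≅ Y) → X ∈ V → Y ∈ V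
  U_shift : ∀ ⦃X : D⦄, X ∈ U → X⟦(1 : ℤ)⟧ ∈ U
  V_shift : ∀ ⦃X : D⦄, X ∈ V → X⟦(-1 : ℤ)⟧ ∈ V
  hom_zero : ∀ ⦃X Y : D⦄, X ∈ U → Y ∈ V → ∀ f : X⟦(1 : ℤ)⟧ ⟶ Y, f = 0
  exists_triangle : ∀ C₀ ∈ S, ∃ (X Y : D) (_ : X ∈ U) (_ : Y⟦(1 : ℤ)⟧ ∈ V)
    (f : X ⟶ C₀) (g : C₀ ⟶ Y) (h : Y ⟶ X⟦(1 : ℤ)⟧), Triangle.mk f g h ∈ distTriang D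

namespace TStructureOn

variable {D} {S : Set D} (t : TStructureOn D S)

/-- The heart of a t-structure, as a set of objects. -/
def heartSet : Set D := t.U ∩ t.V

/-- The heart of a t-structure, as a (full sub)category. -/
abbrev Heart := ObjectProperty.FullSubcategory (· ∈ t.heartSet)

/-- The inclusion of the heart into the ambient category. -/
def heartIncl : t.Heart ⥤ D := ObjectProperty.ι _

/-- A t-structure is bounded if every object of the (sub)category lies in some shift
of the aisle and in some shift of the coaisle. -/
def IsBounded : Prop :=
  (∀ X ∈ S, ∃ n : ℤ, X⟦n⟧ ∈ t.U) ∧ (∀ X ∈ S, ∃ n : ℤ, X⟦n⟧ ∈ t.V)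

end TStructureOn

/-- The aisle `U` of a t-structure is stable under a Serre functor on the ambient
(sub)category. -/
def SerreStable (k : Type u₁) [Field k] [CategoryTheory.Linear k D] {S : Set D}
    (Se : SerreFunctorOn D k S) (U : Set D) : Prop :=
  ∀ X : ObjectProperty.FullSubcategory (· ∈ S), X.obj ∈ U → (Se.F.obj X).obj ∈ U

/-- A preaisle in the strictly full subcategory of `D` with objects `S`: a strictly full
subcategory closed under suspension and extensions. -/
def IsPreaisleOn (S P : Set D) : Prop :=
  P ⊆ S ∧ (∀ ⦃X Y : D⦄, (X ≅ Y) → X ∈ P → Y ∈ P) ∧ (∀ ⦃X : D⦄, X ∈ P → X⟦(1 : ℤ)⟧ ∈ P) ∧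
    (∀ T : Triangle D, (T ∈ distTriang D) → T.obj₁ ∈ P → T.obj₃ ∈ P → T.obj₂ ∈ S → T.obj₂ ∈ P)

/-- The smallest preaisle (in the subcategory with objects `S`) containing `E`. -/
def preaisleGenOn (S : Set D) (E : D) : Set D :=
  ⋂₀ {P : Set D | IsPreaisleOn D S P ∧ E ∈ P}

/-- A thick (triangulated, retract-closed) subcategory of the subcategory with objects `S`. -/
def IsThickOn (S P : Set D) : Prop :=
  P ⊆ S ∧ (∀ ⦃X Y : D⦄, (X ≅ Y) → X ∈ P → Y ∈ P) ∧
    (∀ ⦃X : D⦄, X ∈ P → X⟦(1 : ℤ)⟧ ∈ P ∧ X⟦(-1 : ℤ)⟧ ∈ P) ∧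
    (∀ T : Triangle D, (T ∈ distTriang D) → T.obj₁ ∈ P → T.obj₃ ∈ P → T.obj₂ ∈ S → T.obj₂ ∈ P) ∧
    (∀ ⦃X Y : D⦄, X ∈ P → Y ∈ S → ∀ (i : Y ⟶ X) (r : X ⟶ Y), i ≫ r = 𝟙 Y → Y ∈ P)

/-- The smallest thick subcategory (of the subcategory with objects `S`) containing `E`. -/
def thickGenOn (S : Set D) (E : D) : Set D :=
  ⋂₀ {P : Set D | IsThickOn D S P ∧ E ∈ P}

/-- `E` is a partial silting object: `Hom(E, E[n]) = 0` for `n > 0`. -/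
def IsPartialSilting (S : Set D) (E : D) : Prop :=
  E ∈ S ∧ ∀ n : ℤ, 0 < n → ∀ f : E ⟶ E⟦n⟧, f = 0

/-- `E` is a silting object: partial silting and it generates the category as a thick
subcategory. -/
def IsSilting (S : Set D) (E : D) : Prop :=
  IsPartialSilting D S E ∧ thickGenOn D S E = S

/-- `E` is a partial tilting object: `Hom(E, E[n]) = 0` for `n ≠ 0`. -/
def IsPartialTilting (S : Set D) (E : D) : Prop :=
  E ∈ S ∧ ∀ n : ℤ, n ≠ 0 → ∀ f : E ⟶ E⟦n⟧, f = 0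

/-- `E` is a tilting object: partial tilting and it generates the category as a thick
subcategory. -/
def IsTilting (S : Set D) (E : D) : Prop :=
  IsPartialTilting D S E ∧ thickGenOn D S E = S

/-- The aisle `U` of the t-structure `t` is finitely generated: it is the smallest
preaisle containing some partial silting object. -/
def TStructureOn.FinitelyGenerated {D : Type u} [Category.{v} D] [HasZeroObject D]
    [Preadditive D] [HasShift D ℤ] [∀ n : ℤ, (shiftFunctor D n).Additive] [Pretriangulated D]
    {S : Set D} (t : TStructureOn D S) : Prop :=
  ∃ E : D, IsPartialSilting D S E ∧ t.U = preaisleGenOn D S E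

/-- A torsion class in the abelian category whose objects are `H` (the heart of a
t-structure on `D`, where short exact sequences correspond to distinguished triangles):
a strictly full subcategory closed under extensions and quotients, such that the
inclusion admits a right adjoint (expressed pointwise). -/
def IsTorsionClassOn (H T : Set D) : Prop :=
  T ⊆ H ∧ (∀ ⦃X Y : D⦄, (X ≅ Y) → X ∈ T → Y ∈ T) ∧
    (∀ Tr : Triangle D, (Tr ∈ distTriang D) → Tr.obj₁ ∈ T → Tr.obj₃ ∈ T → Tr.obj₂ ∈ H →
      Tr.obj₂ ∈ T) ∧
    (∀ Tr : Triangle D, (Tr ∈ distTriang D) → Tr.obj₁ ∈ H → Tr.obj₂ ∈ T → Tr.obj₃ ∈ H →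
      Tr.obj₃ ∈ T) ∧
    (∀ X ∈ H, ∃ (TX : D) (_ : TX ∈ T) (c : TX ⟶ X),
      ∀ (Y : D), Y ∈ T → ∀ φ : Y ⟶ X, ∃! ψ : Y ⟶ TX, ψ ≫ c = φ)

/-- A tilting torsion class: a torsion class such that every object of the heart embeds
(in the heart) into an object of the torsion class. -/
def IsTiltingTorsionClassOn (H T : Set D) : Prop :=
  IsTorsionClassOn D H T ∧ ∀ (X : D) (hX : X ∈ H), ∃ (T' : D) (_ : T' ∈ T) (hT'H : T' ∈ H)
    (f : X ⟶ T'), Mono (ObjectProperty.homMk f : (⟨X, hX⟩ : ObjectProperty.FullSubcategory (· ∈ H)) ⟶ ⟨T', hT'H⟩)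

end Triangulated

section Db

variable (A : Type u) [Category.{v} A] [Abelian A] [HasDerivedCategory.{w} A]

/-- The objects of the bounded derived category `D^b(A)`, i.e. the objects of the
derived category of `A` with bounded cohomology. -/
def Bdd : Set (DerivedCategory A) :=
  {X | ∃ a b : ℤ, ∀ n : ℤ, (n < a ∨ b < n) →
    IsZero ((DerivedCategory.homologyFunctor A n).obj X)}

lemma shift_mem_Bdd {X : DerivedCategory A} (hX : X ∈ Bdd A) (m : ℤ) : X⟦m⟧ ∈ Bdd A := by
  obtain ⟨a, b, h⟩ := hX
  refine ⟨a - m, b - m, fun n hn => ?_⟩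
  exact IsZero.of_iso (h (m + n) (by omega))
    (((DerivedCategory.homologyFunctor A 0).shiftIso m n (m + n) rfl).app X)

/-- The canonical functor `A ⥤ D^b(A) ⊆ D(A)`, sending an object to the corresponding
complex concentrated in degree `0`. -/
def singleQ : A ⥤ DerivedCategory A :=
  HomologicalComplex.single A (ComplexShape.up ℤ) 0 ⋙ DerivedCategory.Q

lemma singleQ_obj_mem_Bdd (M : A) : (singleQ A).obj M ∈ Bdd A := by
  refine ⟨0, 0, fun n hn => ?_⟩
  refine IsZero.of_iso ?_
    ((DerivedCategory.homologyFunctorFactors A n).app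
      ((HomologicalComplex.single A (ComplexShape.up ℤ) 0).obj M))
  exact HomologicalComplex.isZero_single_obj_homology _ _ M n (by omega)

/-- The bounded derived category of `A`, as the full subcategory of `D(A)` whose objects
have bounded cohomology. -/
abbrev BddCat := ObjectProperty.FullSubcategory (· ∈ Bdd A)

/-- The suspension functor on the bounded derived category. -/
def bddShift : BddCat A ⥤ BddCat A :=
  ObjectProperty.lift _ (ObjectProperty.ι _ ⋙ shiftFunctor (DerivedCategory A) (1 : ℤ))
    (fun X => shift_mem_Bdd A X.property 1)

/-- The canonical functor `A ⥤ D^b(A)`. -/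
def bddSingle : A ⥤ BddCat A :=
  ObjectProperty.lift _ (singleQ A) (singleQ_obj_mem_Bdd A)

/-- `A` has global dimension at most `d`: `Ext^n(M, N) = 0` for all `n > d`
(expressed via morphisms in the derived category). -/
def HasGlobalDimensionLE (d : ℕ) : Prop :=
  ∀ (M N : A) (n : ℤ), (d : ℤ) < n → ∀ f : (singleQ A).obj M ⟶ ((singleQ A).obj N)⟦n⟧, f = 0

/-- An abelian category is hereditary if `Ext²(-, -) = 0` (equivalently, it has global
dimension at most `1`). -/
def IsHereditaryCat : Prop := HasGlobalDimensionLE A 1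

/-- `A` is Ext-finite over `k`: all Ext-spaces between objects of `A` are
finite-dimensional over `k`. -/
def ExtFinite (k : Type u₁) [Field k] [CategoryTheory.Linear k (DerivedCategory A)] : Prop :=
  ∀ (M N : A) (n : ℤ),
    FiniteDimensional k ((singleQ A).obj M ⟶ ((singleQ A).obj N)⟦n⟧)

/-- The Grothendieck group `K₀` of an abelian category. -/
def K0 : Type u :=
  FreeAbelianGroup (Quotient (isIsomorphicSetoid A)) ⧸
    AddSubgroup.closure {x | ∃ Sc : ShortComplex A, Sc.ShortExact ∧
      x = FreeAbelianGroup.of (Quotient.mk (isIsomorphicSetoid A) Sc.X₂)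
        - FreeAbelianGroup.of (Quotient.mk (isIsomorphicSetoid A) Sc.X₁)
        - FreeAbelianGroup.of (Quotient.mk (isIsomorphicSetoid A) Sc.X₃)}

/-- The class of an object of `A` in `K₀(A)`. -/
def K0cls (M : A) : K0 A :=
  QuotientAddGroup.mk (FreeAbelianGroup.of (Quotient.mk (isIsomorphicSetoid A) M))

/-- `D^b(A)` is discrete: for every function `v : ℤ → K₀(A)` there are only finitely many
isomorphism classes of bounded objects `X` with `[H^i(X)] = v i` for all `i`. -/
def DerivedDiscrete : Prop :=
  ∀ v : ℤ → K0 A,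
    Set.Finite {c : Quotient (isIsomorphicSetoid (BddCat A)) |
      ∃ X : BddCat A, Quotient.mk (isIsomorphicSetoid (BddCat A)) X = c ∧
        ∀ i : ℤ, K0cls A ((DerivedCategory.homologyFunctor A i).obj X.obj) = v i}

end Db

/-- The property that the inclusion `ι : H ⟶ D` of a (heart-like) abelian subcategory
of the triangulated category `D` lifts to a triangulated equivalence from `D^b(H)` to
the strictly full subcategory of `D` with objects `S`. -/
structure DbEquivalence (H : Type u₁) [Category.{v₁} H] [Abelian H] [HasDerivedCategory.{w₁} H]
    (D : Type u) [Category.{v} D] [HasZeroObject D] [Preadditive D] [HasShift D ℤ]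
    [∀ n : ℤ, (shiftFunctor D n).Additive] [Pretriangulated D]
    (S : Set D) (ι : H ⥤ D) where
  /-- the underlying functor `D^b(H) ⥤ D` -/
  F : BddCat H ⥤ D
  mem : ∀ X : BddCat H, F.obj X ∈ S
  /-- `F` commutes with the suspension -/
  commShift : bddShift H ⋙ F ≅ F ⋙ shiftFunctor D (1 : ℤ)
  /-- `F` sends distinguished triangles of `D^b(H)` to distinguished triangles of `D` -/
  map_distinguished : ∀ (T : Triangle (DerivedCategory H)) (_ : T ∈ distTriang (DerivedCategory H))
      (h₁ : T.obj₁ ∈ Bdd H) (h₂ : T.obj₂ ∈ Bdd H) (h₃ : T.obj₃ ∈ Bdd H),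
      Triangle.mk (F.map (X := ⟨T.obj₁, h₁⟩) (Y := ⟨T.obj₂, h₂⟩) (ObjectProperty.homMk T.mor₁))
        (F.map (X := ⟨T.obj₂, h₂⟩) (Y := ⟨T.obj₃, h₃⟩) (ObjectProperty.homMk T.mor₂))
        (F.map (X := ⟨T.obj₃, h₃⟩) (Y := (bddShift H).obj ⟨T.obj₁, h₁⟩) (ObjectProperty.homMk T.mor₃) ≫
          commShift.hom.app ⟨T.obj₁, h₁⟩) ∈ distTriang D
  faithful : F.Faithful
  full : F.Full
  /-- `F` is essentially surjective onto the subcategory with objects `S` -/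
  essSurj : ∀ Y : D, Y ∈ S → ∃ X : BddCat H, Nonempty (F.obj X ≅ Y)
  /-- `F` extends the inclusion `ι` of `H` -/
  extends_incl : bddSingle H ⋙ F ≅ ι

section Algebra

/-- A ring `Γ` has global dimension at most `d`. -/
def RingGlobalDimLE (Γ : Type u) [Ring Γ] (d : ℕ) : Prop :=
  letI : HasDerivedCategory (ModuleCat.{u} Γ) := HasDerivedCategory.standard _
  HasGlobalDimensionLE (ModuleCat.{u} Γ) d

/-- The category `mod Λ` of finite-dimensional (equivalently, finitely generated) right
modules over a finite-dimensional algebra `Λ`, i.e. finitely generated left modules over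
`Λᵐᵒᵖ`. -/
abbrev ModA (Λ : Type u) [Ring Λ] := FGModuleCat Λᵐᵒᵖ

/-- A finite-dimensional algebra is hereditary if the category of its right modules is
hereditary, i.e. if `Λ` has right global dimension at most 1. -/
def HereditaryAlg (Λ : Type u) [Ring Λ] : Prop := RingGlobalDimLE Λᵐᵒᵖ 1

end Algebra

end Paper

namespace Paper

/-- Composite of a chain of morphisms `Z 0 ⟶ Z 1 ⟶ ⋯ ⟶ Z n`. -/
def chainComp {D : Type u} [Category.{v} D] (Z : ℕ → D) (g : ∀ i : ℕ, Z i ⟶ Z (i + 1)) :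
    ∀ n : ℕ, Z 0 ⟶ Z n
  | 0 => 𝟙 (Z 0)
  | n + 1 => chainComp Z g n ≫ g n

variable (A : Type u) [Category.{v} A] [Abelian A] [HasDerivedCategory.{w} A]

/-- The aisle of the standard t-structure on `D^b(A)`: bounded complexes with vanishing
cohomology in positive degrees. -/
def stdAisle : Set (DerivedCategory A) :=
  {X | X ∈ Bdd A ∧ ∀ n : ℤ, 0 < n → IsZero ((DerivedCategory.homologyFunctor A n).obj X)}

/-- The coaisle of the standard t-structure on `D^b(A)`: bounded complexes with vanishing
cohomology in negative degrees. -/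
def stdCoaisle : Set (DerivedCategory A) :=
  {X | X ∈ Bdd A ∧ ∀ n : ℤ, n < 0 → IsZero ((DerivedCategory.homologyFunctor A n).obj X)}

end Paper

namespace DEquiv

open Paper CategoryTheory CategoryTheory.Limits CategoryTheory.Pretriangulated

variable {A : Type u} [Category.{v} A] [Abelian A] [HasDerivedCategory.{w} A]
  (t : Paper.TStructureOn (DerivedCategory A) (Paper.Bdd A))

local notation "D" => DerivedCategory A

lemma bdd_iso {X Y : D} (e : X ≅ Y) (hX : X ∈ Bdd A) : Y ∈ Bdd A := by
  obtain ⟨a, b, h⟩ := hX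
  exact ⟨a, b, fun n hn => (h n hn).of_iso ((DerivedCategory.homologyFunctor A n).mapIso e.symm)⟩

lemma bdd₂ {T : Triangle D} (hT : T ∈ distTriang D)
    (h1 : T.obj₁ ∈ Bdd A) (h3 : T.obj₃ ∈ Bdd A) : T.obj₂ ∈ Bdd A := by
  obtain ⟨a1, b1, hh1⟩ := h1
  obtain ⟨a3, b3, hh3⟩ := h3
  refine ⟨min a1 a3, max b1 b3, fun n hn => ?_⟩
  have hex := (DerivedCategory.homologyFunctor A n).map_distinguished_exact T hT
  exact hex.isZero_X₂ ((hh1 n (by omega)).eq_of_src _ _) ((hh3 n (by omega)).eq_of_tgt _ _)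

lemma zero_shift (m : ℤ) {P Q : D} (f : P ⟶ Q) (h : f⟦m⟧' = 0) : f = 0 :=
  (shiftFunctor D m).map_injective (by rw [h, Functor.map_zero])

/-- `Hom(U, V⟦1⟧-stuff)` vanishing: unshifted version. -/
lemma hz0 {X Y : D} (hX : X ∈ t.U) (hY : Y⟦(1:ℤ)⟧ ∈ t.V) (f : X ⟶ Y) : f = 0 :=
  zero_shift 1 f (t.hom_zero hX hY (f⟦(1:ℤ)⟧'))

lemma hzm {X Y : D} (hX : X ∈ t.U) (hY : Y ∈ t.V) (f : X ⟶ Y⟦(-1:ℤ)⟧) : f = 0 := by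
  apply zero_shift 1
  have h0 : f⟦(1:ℤ)⟧' ≫ (shiftFunctorCompIsoId D (-1) (1:ℤ) (by ring)).hom.app Y = 0 :=
    t.hom_zero hX hY _
  rw [← cancel_mono ((shiftFunctorCompIsoId D (-1) (1:ℤ) (by ring)).hom.app Y), zero_comp]
  exact h0

lemma hV_down {Y : D} (hY : Y⟦(1:ℤ)⟧ ∈ t.V) : Y ∈ t.V :=
  t.V_iso ((shiftFunctorCompIsoId D (1:ℤ) (-1) (by ring)).app Y) (t.V_shift hY)

lemma heart_iso {X Y : D} (e : X ≅ Y) (h : X ∈ t.heartSet) : Y ∈ t.heartSet :=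
  ⟨t.U_iso e h.1, t.V_iso e h.2⟩

lemma heart_bdd {X : D} (h : X ∈ t.heartSet) : X ∈ Bdd A := t.U_subset h.1

lemma heart_shift_congr {X : D} {m m' : ℤ} (h : X⟦m⟧ ∈ t.heartSet) (e : m = m') :
    X⟦m'⟧ ∈ t.heartSet := e ▸ h

lemma mem_heart_shift_zero {X : D} (h : X ∈ t.heartSet) (m : ℤ) (hm : m = 0) :
    X⟦m⟧ ∈ t.heartSet :=
  heart_iso t ((shiftFunctorZero' D m hm).app X).symm h

lemma mem_heart_shift₂ {X : D} (h : X ∈ t.heartSet) (m k : ℤ) (hmk : m + k = 0) :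
    X⟦m⟧⟦k⟧ ∈ t.heartSet :=
  heart_iso t (((shiftFunctorZero D ℤ).app X).symm ≪≫ (shiftFunctorAdd' D m k 0 hmk).app X) h

lemma heart_shift_add {X : D} {m : ℤ} (h : X⟦m⟧ ∈ t.heartSet) (b c : ℤ) (hbc : b + c = m) :
    X⟦b⟧⟦c⟧ ∈ t.heartSet :=
  heart_iso t ((shiftFunctorAdd' D b c m hbc).app X) h

lemma isZero₁_of_mor₁_zero {T : Triangle D} (hT : T ∈ distTriang D) (h : T.mor₁ = 0)
    (h1 : T.obj₁ ∈ t.U) (h3 : T.obj₃ ∈ t.V) : IsZero T.obj₁ := by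
  have hT' := inv_rot_of_distTriang T hT
  obtain ⟨g, hg⟩ := Triangle.coyoneda_exact₂ _ hT' (𝟙 T.obj₁) (by
    exact (Category.id_comp _).trans h)
  erw [IsZero.iff_id_eq_zero, hg, hzm t h1 h3 g, zero_comp]; rfl

lemma isZero₃_of_mor₂_zero {T : Triangle D} (hT : T ∈ distTriang D) (h : T.mor₂ = 0)
    (h1 : T.obj₁ ∈ t.U) (h3 : T.obj₃ ∈ t.V) : IsZero T.obj₃ := by
  have hT' := rot_of_distTriang T hT
  obtain ⟨g, hg⟩ := Triangle.yoneda_exact₂ _ hT' (𝟙 T.obj₃) (by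
    exact (Category.comp_id _).trans h)
  erw [IsZero.iff_id_eq_zero, hg, t.hom_zero h1 h3 g, comp_zero]; rfl

lemma critL {X : D} (hX : X ∈ Bdd A)
    (h : ∀ Y : D, Y⟦(1:ℤ)⟧ ∈ t.V → ∀ f : X ⟶ Y, f = 0) : X ∈ t.U := by
  obtain ⟨P, W, hP, hW, p, w, d, hT⟩ := t.exists_triangle X hX
  have hw : w = 0 := h W hW w
  have hzW : IsZero W := isZero₃_of_mor₂_zero t hT hw hP (hV_down t hW)
  have : IsIso p := (Triangle.isZero₃_iff_isIso₁ _ hT).1 hzW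
  exact t.U_iso (asIso p) hP

lemma critR {X : D} (hX : X ∈ Bdd A)
    (h : ∀ Z : D, Z ∈ t.U → ∀ f : Z⟦(1:ℤ)⟧ ⟶ X, f = 0) : X ∈ t.V := by
  obtain ⟨P, W, hP, hW, p, w, d, hT⟩ := t.exists_triangle (X⟦(-1:ℤ)⟧)
    (Paper.shift_mem_Bdd A hX (-1))
  have hp : p = 0 := by
    apply zero_shift 1
    have h0 : p⟦(1:ℤ)⟧' ≫ (shiftFunctorCompIsoId D (-1) (1:ℤ) (by ring)).hom.app X = 0 :=
      h P hP _
    rw [← cancel_mono ((shiftFunctorCompIsoId D (-1) (1:ℤ) (by ring)).hom.app X), zero_comp]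
    exact h0
  have hzP : IsZero P := isZero₁_of_mor₁_zero t hT hp hP (hV_down t hW)
  have : IsIso w := (Triangle.isZero₁_iff_isIso₂ _ hT).1 hzP
  exact t.V_iso (((shiftFunctor D (1:ℤ)).mapIso (asIso w)).symm ≪≫
    (shiftFunctorCompIsoId D (-1) (1:ℤ) (by ring)).app X) hW

lemma extU {T : Triangle D} (hT : T ∈ distTriang D) (h1 : T.obj₁ ∈ t.U) (h3 : T.obj₃ ∈ t.U)
    (h2b : T.obj₂ ∈ Bdd A) : T.obj₂ ∈ t.U := by
  refine critL t h2b (fun Y hY f => ?_)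
  obtain ⟨g, hg⟩ := Triangle.yoneda_exact₂ _ hT f (hz0 t h1 hY _)
  rw [hg, hz0 t h3 hY g, comp_zero]

lemma extV {T : Triangle D} (hT : T ∈ distTriang D) (h1 : T.obj₁ ∈ t.V) (h3 : T.obj₃ ∈ t.V)
    (h2b : T.obj₂ ∈ Bdd A) : T.obj₂ ∈ t.V := by
  refine critR t h2b (fun Z hZ f => ?_)
  obtain ⟨g, hg⟩ := Triangle.coyoneda_exact₂ _ hT f (t.hom_zero hZ h3 _)
  rw [hg, t.hom_zero hZ h1 g, zero_comp]

lemma extH {T : Triangle D} (hT : T ∈ distTriang D) (h1 : T.obj₁ ∈ t.heartSet)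
    (h3 : T.obj₃ ∈ t.heartSet) (h2b : T.obj₂ ∈ Bdd A) : T.obj₂ ∈ t.heartSet :=
  ⟨extU t hT h1.1 h3.1 h2b, extV t hT h1.2 h3.2 h2b⟩

lemma coneU {T : Triangle D} (hT : T ∈ distTriang D) (h1 : T.obj₁ ∈ t.U) (h2 : T.obj₂ ∈ t.U)
    (h3b : T.obj₃ ∈ Bdd A) : T.obj₃ ∈ t.U :=
  extU t (rot_of_distTriang T hT) h2 (t.U_shift h1) h3b


lemma cancel_of_epi {C X : t.Heart} (e : C ⟶ X) (he : Epi e)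
    (To : D) (hTo : To ∈ t.heartSet) (φ : X.obj ⟶ To)
    (h : e.hom ≫ φ = 0) : φ = 0 := by
  have : ObjectProperty.homMk φ = (0 : X ⟶ (⟨To, hTo⟩ : t.Heart)) := by
    apply he.left_cancellation (Z := ⟨To, hTo⟩) (ObjectProperty.homMk φ) 0
    ext
    simp [h]
  exact congrArg (fun k => k.hom) this

lemma cancel_of_mono {Y C : t.Heart} (m : Y ⟶ C) (hm : Mono m)
    (To : D) (hTo : To ∈ t.heartSet) (φ : To ⟶ Y.obj)
    (h : φ ≫ m.hom = 0) : φ = 0 := by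
  have : ObjectProperty.homMk φ = (0 : (⟨To, hTo⟩ : t.Heart) ⟶ Y) := by
    apply hm.right_cancellation (Z := ⟨To, hTo⟩) (ObjectProperty.homMk φ) 0
    ext
    simp [h]
  exact congrArg (fun k => k.hom) this

lemma epi_of_cancel {C X : t.Heart} (e : C ⟶ X)
    (h : ∀ To : D, To ∈ t.heartSet → ∀ φ : X.obj ⟶ To,
      e.hom ≫ φ = 0 → φ = 0) : Epi e := by
  refine ⟨fun {Z} g h' H => ?_⟩
  have h0 : e.hom ≫ (g.hom - h'.hom) = 0 := by
    rw [Preadditive.comp_sub, sub_eq_zero]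
    simpa using congrArg (fun k => k.hom) H
  have := h Z.obj Z.property _ h0
  ext
  exact sub_eq_zero.1 this

lemma mono_of_cancel {Y C : t.Heart} (m : Y ⟶ C)
    (h : ∀ To : D, To ∈ t.heartSet → ∀ φ : To ⟶ Y.obj,
      φ ≫ m.hom = 0 → φ = 0) : Mono m := by
  refine ⟨fun {Z} g h' H => ?_⟩
  have h0 : (g.hom - h'.hom) ≫ m.hom = 0 := by
    rw [Preadditive.sub_comp, sub_eq_zero]
    simpa using congrArg (fun k => k.hom) H
  have := h Z.obj Z.property _ h0
  ext
  exact sub_eq_zero.1 this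

lemma ext1Realize {Xo Z1 : D} (hX : Xo ∈ t.heartSet) (hZ : Z1⟦(-1:ℤ)⟧ ∈ t.heartSet)
    (δ : Xo ⟶ Z1) :
    ∃ (E : D) (_ : E ∈ t.heartSet) (e : E ⟶ Xo), e ≫ δ = 0 ∧
      ∀ To : D, To ∈ t.heartSet → ∀ φ : Xo ⟶ To, e ≫ φ = 0 → φ = 0 := by
  obtain ⟨R, a, b, hT⟩ := distinguished_cocone_triangle δ
  have hT' : (Triangle.mk δ a b).invRotate ∈ distTriang D := inv_rot_of_distTriang _ hT
  have hT₂ : (Triangle.mk δ a b).invRotate.invRotate ∈ distTriang D :=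
    inv_rot_of_distTriang _ hT'
  have hZ1b : Z1 ∈ Bdd A :=
    bdd_iso ((shiftFunctorCompIsoId D (-1) (1:ℤ) (by ring)).app Z1)
      (shift_mem_Bdd A (heart_bdd t hZ) 1)
  have hRb : R ∈ Bdd A := bdd₂ (rot_of_distTriang _ hT) hZ1b (shift_mem_Bdd A (heart_bdd t hX) 1)
  have hE : (R⟦(-1:ℤ)⟧ : D) ∈ t.heartSet := by
    refine extH t hT₂ ?_ hX (shift_mem_Bdd A hRb (-1))
    exact hZ
  refine ⟨R⟦(-1:ℤ)⟧, hE, (Triangle.mk δ a b).invRotate.mor₁, ?_, ?_⟩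
  · exact comp_distTriang_mor_zero₁₂ _ hT'
  · intro To hTo φ hφ
    obtain ⟨g, hg⟩ := Triangle.yoneda_exact₃ _ hT₂ φ hφ
    erw [hg, t.hom_zero hZ.1 hTo.2 g, comp_zero]; rfl

lemma monoRealize {Yo B₀ : D} (hY : Yo ∈ t.heartSet) (hB : B₀ ∈ t.heartSet)
    (u : B₀ ⟶ Yo⟦(1:ℤ)⟧) :
    ∃ (E : D) (_ : E ∈ t.heartSet) (m : Yo ⟶ E), u ≫ m⟦(1:ℤ)⟧' = 0 ∧
      ∀ To : D, To ∈ t.heartSet → ∀ φ : To ⟶ Yo, φ ≫ m = 0 → φ = 0 := by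
  obtain ⟨R, a, b, hT⟩ := distinguished_cocone_triangle u
  have hT' : (Triangle.mk u a b).invRotate ∈ distTriang D := inv_rot_of_distTriang _ hT
  have hT₂ : (Triangle.mk u a b).invRotate.invRotate ∈ distTriang D :=
    inv_rot_of_distTriang _ hT'
  have hT₃ : (Triangle.mk u a b).invRotate.invRotate.invRotate ∈ distTriang D :=
    inv_rot_of_distTriang _ hT₂
  set ν : Yo ≅ (Yo⟦(1:ℤ)⟧)⟦(-1:ℤ)⟧ :=
    ((shiftFunctorCompIsoId D (1:ℤ) (-1) (by ring)).app Yo).symm with hν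
  have hRb : R ∈ Bdd A := bdd₂ (rot_of_distTriang _ hT)
    (shift_mem_Bdd A (heart_bdd t hY) 1) (shift_mem_Bdd A (heart_bdd t hB) 1)
  have hE : (R⟦(-1:ℤ)⟧ : D) ∈ t.heartSet := by
    refine extH t hT₂ ?_ hB (shift_mem_Bdd A hRb (-1))
    exact heart_iso t ν hY
  refine ⟨R⟦(-1:ℤ)⟧, hE, ν.hom ≫ (Triangle.mk u a b).invRotate.invRotate.mor₁, ?_, ?_⟩
  · have hvan := comp_distTriang_mor_zero₃₁ _ hT₂
    have hcompat : (ν.hom)⟦(1:ℤ)⟧' =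
        (shiftFunctorCompIsoId D (-1) (1:ℤ) (by ring)).inv.app (Yo⟦(1:ℤ)⟧) := by
      rw [hν]
      exact shift_shiftFunctorCompIsoId_inv_app (1:ℤ) (-1) (by ring) Yo
    erw [Functor.map_comp, hcompat, ← Category.assoc]
    exact hvan
  · intro To hTo φ hφ
    have hφν : (φ ≫ ν.hom) ≫ (Triangle.mk u a b).invRotate.invRotate.mor₁ = 0 := by
      erw [Category.assoc]; exact hφ
    obtain ⟨g, hg⟩ := Triangle.coyoneda_exact₂ _ hT₃ (φ ≫ ν.hom) hφν
    have hg0 : g = 0 := hzm t hTo.1 hB.2 g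
    have : φ ≫ ν.hom = 0 := by erw [hg, hg0, zero_comp]; rfl
    rw [← Category.comp_id φ, ← ν.hom_inv_id, ← Category.assoc, this, zero_comp]


lemma kernelRealize {Co Xo : D} (hC : Co ∈ t.heartSet) (hX : Xo ∈ t.heartSet) (e : Co ⟶ Xo)
    (hcancel : ∀ To : D, To ∈ t.heartSet → ∀ φ : Xo ⟶ To, e ≫ φ = 0 → φ = 0) :
    ∃ (K : D) (_ : K ∈ t.heartSet) (δ : Xo ⟶ K⟦(1:ℤ)⟧),
      ∀ (M : D) (f : Xo ⟶ M), e ≫ f = 0 → ∃ k : K⟦(1:ℤ)⟧ ⟶ M, f = δ ≫ k := by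
  obtain ⟨Q, q, d, hT⟩ := distinguished_cocone_triangle e
  have hQb : Q ∈ Bdd A := bdd₂ (rot_of_distTriang _ hT) (heart_bdd t hX)
    (shift_mem_Bdd A (heart_bdd t hC) 1)
  have hQU : Q ∈ t.U := coneU t hT hC.1 hX.1 hQb
  have hKb : (Q⟦(-1:ℤ)⟧ : D) ∈ Bdd A := shift_mem_Bdd A hQb (-1)
  set ci2 := shiftFunctorCompIsoId D (-1) (1:ℤ) (by ring) with hci2
  have hKV : (Q⟦(-1:ℤ)⟧ : D) ∈ t.V := by
    refine critR t hKb (fun Z hZ φ => ?_)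
    have hφ' : ((φ⟦(1:ℤ)⟧' ≫ ci2.hom.app Q) ≫ d) = 0 := by
      obtain ⟨η, hη⟩ := (shiftFunctor D (1:ℤ)).map_surjective
        ((φ⟦(1:ℤ)⟧' ≫ ci2.hom.app Q) ≫ d)
      rw [← hη, t.hom_zero hZ hC.2 η, Functor.map_zero]
    obtain ⟨g, hg⟩ := Triangle.coyoneda_exact₃ _ hT (φ⟦(1:ℤ)⟧' ≫ ci2.hom.app Q) hφ'
    have hg0 : g = 0 := by
      obtain ⟨ζ, hζ⟩ := (shiftFunctor D (1:ℤ)).map_surjective (g ≫ ci2.inv.app Xo)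
      have h1 : g ≫ ci2.inv.app Xo = 0 := by
        rw [← hζ, hzm t (t.U_shift hZ) hX.2 ζ, Functor.map_zero]
      erw [← cancel_mono (ci2.inv.app Xo), zero_comp]
      exact h1
    have h2 : φ⟦(1:ℤ)⟧' ≫ ci2.hom.app Q = 0 := by erw [hg, hg0, zero_comp]; rfl
    apply zero_shift (1:ℤ)
    rw [← cancel_mono (ci2.hom.app Q), zero_comp]
    exact h2
  have hKU : (Q⟦(-1:ℤ)⟧ : D) ∈ t.U := by
    obtain ⟨P, W, hP, hW, p, w, d₀, hTr⟩ := t.exists_triangle (Q⟦(-1:ℤ)⟧) hKb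
    have hrot3 := rot_of_distTriang _ (rot_of_distTriang _ (rot_of_distTriang _ hTr))
    have hW1U : (W⟦(1:ℤ)⟧ : D) ∈ t.U := by
      refine coneU t hrot3 (t.U_shift hP) ?_ (shift_mem_Bdd A (t.V_subset (hV_down t hW)) 1)
      exact t.U_iso (ci2.app Q).symm hQU
    have hWH : (W⟦(1:ℤ)⟧ : D) ∈ t.heartSet := ⟨hW1U, hW⟩
    have h12 : e ≫ q = 0 := comp_distTriang_mor_zero₁₂ _ hT
    have he0 : e ≫ (q ≫ ci2.inv.app Q ≫ w⟦(1:ℤ)⟧') = 0 := by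
      rw [← Category.assoc, h12, zero_comp]
    have h₀ : q ≫ ci2.inv.app Q ≫ w⟦(1:ℤ)⟧' = 0 := hcancel _ hWH _ he0
    have hw : w = 0 := by
      obtain ⟨g', hg'⟩ := Triangle.yoneda_exact₃ _ hT (ci2.inv.app Q ≫ w⟦(1:ℤ)⟧') h₀
      have hg'0 : g' = 0 := t.hom_zero hC.1 hW g'
      have h3 : ci2.inv.app Q ≫ w⟦(1:ℤ)⟧' = 0 := by erw [hg', hg'0, comp_zero]; rfl
      apply zero_shift (1:ℤ)
      rw [← cancel_epi (ci2.inv.app Q), comp_zero]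
      exact h3
    have hzW : IsZero W := isZero₃_of_mor₂_zero t hTr hw hP (hV_down t hW)
    have : IsIso p := (Triangle.isZero₃_iff_isIso₁ _ hTr).1 hzW
    exact t.U_iso (asIso p) hP
  refine ⟨Q⟦(-1:ℤ)⟧, ⟨hKU, hKV⟩, q ≫ ci2.inv.app Q, fun M f hf => ?_⟩
  obtain ⟨g, hg⟩ := Triangle.yoneda_exact₂ _ hT f hf
  have hg' : f = q ≫ g := hg
  exact ⟨ci2.hom.app Q ≫ g, by simp only [Category.assoc]; erw [Iso.inv_hom_id_app_assoc]; exact hg'⟩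

lemma cokernelRealize {Yo Co : D} (hY : Yo ∈ t.heartSet) (hC : Co ∈ t.heartSet) (m : Yo ⟶ Co)
    (hmc : ∀ To : D, To ∈ t.heartSet → ∀ φ : To ⟶ Yo, φ ≫ m = 0 → φ = 0) :
    ∃ (Q₀ : D) (_ : Q₀ ∈ t.heartSet) (π : Q₀⟦(-1:ℤ)⟧ ⟶ Yo),
      ∀ (M : D) (f : M ⟶ Yo), f ≫ m = 0 → ∃ u : M ⟶ Q₀⟦(-1:ℤ)⟧, f = u ≫ π := by
  obtain ⟨Q₀, pq, dq, hT⟩ := distinguished_cocone_triangle m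
  have hT' : (Triangle.mk m pq dq).invRotate ∈ distTriang D := inv_rot_of_distTriang _ hT
  set ci2 := shiftFunctorCompIsoId D (-1) (1:ℤ) (by ring) with hci2
  have hQb : Q₀ ∈ Bdd A := bdd₂ (rot_of_distTriang _ hT) (heart_bdd t hC)
    (shift_mem_Bdd A (heart_bdd t hY) 1)
  have hQU : Q₀ ∈ t.U := by
    refine critL t hQb (fun Y hY' f => ?_)
    obtain ⟨g, hg⟩ := Triangle.yoneda_exact₂ _ (rot_of_distTriang _ hT) f
      (hz0 t hC.1 hY' _)
    erw [hg, t.hom_zero hY.1 (hV_down t hY') g, comp_zero]; rfl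
  have hQV : Q₀ ∈ t.V := by
    obtain ⟨P, W, hP, hW, p₁, w₁, d₁, hTr⟩ := t.exists_triangle (Q₀⟦(-1:ℤ)⟧)
      (shift_mem_Bdd A hQb (-1))
    have hPV : P ∈ t.V := by
      refine critR t (t.U_subset hP) (fun Z hZ φ => ?_)
      have hξ : φ ≫ p₁ = 0 := by
        have hd : ((φ ≫ p₁)⟦(1:ℤ)⟧' ≫ ci2.hom.app Q₀) ≫ dq = 0 := by
          obtain ⟨η, hη⟩ := (shiftFunctor D (1:ℤ)).map_surjective
            (((φ ≫ p₁)⟦(1:ℤ)⟧' ≫ ci2.hom.app Q₀) ≫ dq)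
          rw [← hη, t.hom_zero hZ hY.2 η, Functor.map_zero]
        obtain ⟨g, hg⟩ := Triangle.coyoneda_exact₃ _ hT
          ((φ ≫ p₁)⟦(1:ℤ)⟧' ≫ ci2.hom.app Q₀) hd
        have hg0 : g = 0 := by
          obtain ⟨ζ, hζ⟩ := (shiftFunctor D (1:ℤ)).map_surjective (g ≫ ci2.inv.app Co)
          have h1 : g ≫ ci2.inv.app Co = 0 := by
            rw [← hζ, hzm t (t.U_shift hZ) hC.2 ζ, Functor.map_zero]
          erw [← cancel_mono (ci2.inv.app Co), zero_comp]
          exact h1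
        have h2 : (φ ≫ p₁)⟦(1:ℤ)⟧' ≫ ci2.hom.app Q₀ = 0 := by erw [hg, hg0, zero_comp]; rfl
        apply zero_shift (1:ℤ)
        rw [← cancel_mono (ci2.hom.app Q₀), zero_comp]
        exact h2
      obtain ⟨g₂, hg₂⟩ := Triangle.coyoneda_exact₂ _ (inv_rot_of_distTriang _ hTr) φ hξ
      erw [hg₂, hzm t (t.U_shift hZ) (hV_down t hW) g₂, zero_comp]; rfl
    have hPH : P ∈ t.heartSet := ⟨hP, hPV⟩
    obtain ⟨ρ, hρ⟩ := (shiftFunctor D (1:ℤ)).map_surjective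
      ((p₁⟦(1:ℤ)⟧' ≫ ci2.hom.app Q₀) ≫ dq)
    have h31 : dq ≫ m⟦(1:ℤ)⟧' = 0 := comp_distTriang_mor_zero₃₁ _ hT
    have hρm : ρ ≫ m = 0 := by
      apply zero_shift (1:ℤ)
      rw [Functor.map_comp, hρ, Category.assoc, Category.assoc, h31, comp_zero, comp_zero]
    have hρ0 : ρ = 0 := hmc P hPH ρ hρm
    have hσ : (p₁⟦(1:ℤ)⟧' ≫ ci2.hom.app Q₀) ≫ dq = 0 := by rw [← hρ, hρ0, Functor.map_zero]
    obtain ⟨g₃, hg₃⟩ := Triangle.coyoneda_exact₃ _ hT (p₁⟦(1:ℤ)⟧' ≫ ci2.hom.app Q₀) hσ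
    have hg₃0 : g₃ = 0 := t.hom_zero hP hC.2 g₃
    have hσ0 : p₁⟦(1:ℤ)⟧' ≫ ci2.hom.app Q₀ = 0 := by erw [hg₃, hg₃0, zero_comp]; rfl
    have hp₁ : p₁ = 0 := by
      apply zero_shift (1:ℤ)
      rw [← cancel_mono (ci2.hom.app Q₀), zero_comp]
      exact hσ0
    have hzP : IsZero P := isZero₁_of_mor₁_zero t hTr hp₁ hP (hV_down t hW)
    have : IsIso w₁ := (Triangle.isZero₁_iff_isIso₂ _ hTr).1 hzP
    exact t.V_iso (((shiftFunctor D (1:ℤ)).mapIso (asIso w₁)).symm ≪≫ ci2.app Q₀) hW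
  refine ⟨Q₀, ⟨hQU, hQV⟩, (Triangle.mk m pq dq).invRotate.mor₁, fun M f hf => ?_⟩
  exact Triangle.coyoneda_exact₂ _ hT' f hf


inductive Chain (t : Paper.TStructureOn (DerivedCategory A) (Paper.Bdd A)) :
    ℤ → ℕ → ∀ {X Y' : DerivedCategory A}, (X ⟶ Y') → Prop
  | single (a : ℤ) {X Y' : DerivedCategory A} (f : X ⟶ Y') (hX : X⟦(-a : ℤ)⟧ ∈ t.heartSet)
      (hY : Y'⟦(-(a+1) : ℤ)⟧ ∈ t.heartSet) : Chain t a 1 f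
  | cons (a : ℤ) (n : ℕ) {X M Y' : DerivedCategory A} (δ : X ⟶ M) (k : M ⟶ Y')
      (hX : X⟦(-a : ℤ)⟧ ∈ t.heartSet) (h : Chain t (a+1) n k) : Chain t a (n+1) (δ ≫ k)

variable (t : Paper.TStructureOn (DerivedCategory A) (Paper.Bdd A))

lemma chain_iso_right {a : ℤ} {n : ℕ} {X Y' : D} {f : X ⟶ Y'} (h : Chain t a n f) :
    ∀ {Y'' : D} (e : Y' ≅ Y''), Chain t a n (f ≫ e.hom) := by
  induction h with
  | single a f hX hY =>
    intro Y'' e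
    exact .single a _ hX (heart_iso t ((shiftFunctor D _).mapIso e) hY)
  | cons a n δ k hX h ih =>
    intro Y'' e
    rw [Category.assoc]
    exact .cons a n δ (k ≫ e.hom) hX (ih e)

lemma chain_iso_left {a : ℤ} {n : ℕ} {X Y' : D} {f : X ⟶ Y'} (h : Chain t a n f)
    {X' : D} (e : X' ≅ X) : Chain t a n (e.hom ≫ f) := by
  cases h with
  | single _ _ hX hY =>
    exact .single a _ (heart_iso t ((shiftFunctor D _).mapIso e.symm) hX) hY
  | cons _ n δ k hX hc =>
    rw [← Category.assoc]
    exact .cons a n (e.hom ≫ δ) k (heart_iso t ((shiftFunctor D _).mapIso e.symm) hX) hc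

lemma chain_shift {a : ℤ} {n : ℕ} {X Y' : D} {f : X ⟶ Y'} (h : Chain t a n f) :
    Chain t (a+1) n (f⟦(1:ℤ)⟧') := by
  induction h with
  | single a f hX hY =>
    exact .single (a+1) _ (heart_shift_add t hX 1 (-(a+1)) (by ring))
      (heart_shift_add t hY 1 (-(a+1+1)) (by ring))
  | cons a n δ k hX h ih =>
    rw [Functor.map_comp]
    exact .cons (a+1) n _ _ (heart_shift_add t hX 1 (-(a+1)) (by ring)) ih

lemma chain_snoc {a : ℤ} {n : ℕ} {X Y' : D} {f : X ⟶ Y'} (h : Chain t a n f) :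
    ∀ {Y'' : D} (k : Y' ⟶ Y''), Y''⟦(-(a + n + 1) : ℤ)⟧ ∈ t.heartSet →
      Chain t a (n+1) (f ≫ k) := by
  induction h with
  | single a f hX hY =>
    intro Y'' k hk
    exact .cons a 1 f k hX (.single (a+1) k hY
      (heart_shift_congr t hk (by push_cast; ring)))
  | cons a n δ k₀ hX h ih =>
    intro Y'' k hk
    rw [Category.assoc]
    exact .cons a (n+1) δ (k₀ ≫ k) hX
      (ih k (heart_shift_congr t hk (by push_cast; ring)))

lemma chain_spec {a : ℤ} {n : ℕ} {X Y' : D} {f : X ⟶ Y'} (h : Chain t a n f) :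
    ∃ (Z : ℕ → D) (g : ∀ i, Z i ⟶ Z (i+1)) (h0 : Z 0 = X) (hn : Z n = Y'),
      (∀ i ≤ n, (Z i)⟦(-(a + (i:ℤ)) : ℤ)⟧ ∈ t.heartSet) ∧
      eqToHom h0.symm ≫ Paper.chainComp Z g n ≫ eqToHom hn = f := by
  induction h with
  | @single a X Y' f hX hY =>
    refine ⟨fun i => match i with | 0 => X | _+1 => Y',
            fun i => match i with | 0 => f | j+1 => 𝟙 Y', rfl, rfl, ?_, ?_⟩
    · intro i hi
      interval_cases i
      · exact heart_shift_congr t hX (by push_cast; ring)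
      · exact heart_shift_congr t hY (by push_cast; ring)
    · simp [Paper.chainComp]
  | @cons a n X M Y' δ k hX h ih =>
    obtain ⟨Z, g, h0, hn, hmem, hcomp⟩ := ih
    refine ⟨fun i => match i with | 0 => X | j+1 => Z j,
            fun i => match i with | 0 => (δ ≫ eqToHom h0.symm : X ⟶ Z 0) | j+1 => g j,
            rfl, hn, ?_, ?_⟩
    · intro i hi
      match i, hi with
      | 0, _ => exact heart_shift_congr t hX (by push_cast; ring)
      | (j+1), hj =>
        exact heart_shift_congr t (hmem j (by omega)) (by push_cast; ring)
    · have key : ∀ j : ℕ, Paper.chainComp (fun i => match i with | 0 => X | j+1 => Z j)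
          (fun i => match i with | 0 => (δ ≫ eqToHom h0.symm : X ⟶ Z 0) | j+1 => g j) (j+1)
          = (δ ≫ eqToHom h0.symm) ≫ Paper.chainComp Z g j := by
        intro j
        induction j with
        | zero => simp [Paper.chainComp]
        | succ j hj =>
          show Paper.chainComp _ _ (j+1) ≫ _ = _
          rw [hj]
          show _ = _ ≫ Paper.chainComp Z g j ≫ g j
          rw [Category.assoc]
      rw [key n]
      simp only [eqToHom_refl, Category.id_comp, Category.assoc]
      rw [hcomp]

lemma chainComp_first (Z : ℕ → D) (g : ∀ i, Z i ⟶ Z (i+1)) :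
    ∀ n : ℕ, 1 ≤ n → ∃ r : Z 1 ⟶ Z n, Paper.chainComp Z g n = g 0 ≫ r := by
  intro n
  induction n with
  | zero => omega
  | succ n ih =>
    intro _
    rcases Nat.eq_zero_or_pos n with h0 | hpos
    · subst h0
      exact ⟨𝟙 (Z 1), by simp [Paper.chainComp]⟩
    · obtain ⟨r, hr⟩ := ih hpos
      refine ⟨r ≫ g n, ?_⟩
      show Paper.chainComp Z g n ≫ g n = _
      rw [hr, Category.assoc]

variable (t : Paper.TStructureOn (DerivedCategory A) (Paper.Bdd A))

def Cond1 : Prop := ∀ (X Y : t.Heart) (n : ℕ), 2 ≤ n → ∀ f : X.obj ⟶ Y.obj⟦(n : ℤ)⟧,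
  ∃ (C : t.Heart) (e : C ⟶ X), Epi e ∧ e.hom ≫ f = 0

def Cond2 : Prop := ∀ (X Y : t.Heart) (n : ℕ), 2 ≤ n → ∀ f : X.obj ⟶ Y.obj⟦(n : ℤ)⟧,
  ∃ (C : t.Heart) (m : Y ⟶ C), Mono m ∧ f ≫ m.hom⟦(n : ℤ)⟧' = 0

def Cond3 : Prop := ∀ (X Y : t.Heart) (n : ℕ), 2 ≤ n → ∀ f : X.obj ⟶ Y.obj⟦(n : ℤ)⟧,
  ∃ (Z : ℕ → DerivedCategory A) (g : ∀ i : ℕ, Z i ⟶ Z (i + 1)) (h0 : Z 0 = X.obj)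
    (hn : Z n = Y.obj⟦(n : ℤ)⟧),
    (∀ i ≤ n, (Z i)⟦(-(i : ℤ))⟧ ∈ t.heartSet) ∧
      eqToHom h0.symm ≫ chainComp Z g n ≫ eqToHom hn = f

lemma cond3_to_cond1 (h3 : Cond3 t) : Cond1 t := by
  intro X Y n hn f
  obtain ⟨Z, g, h0, hn', hmem, hcomp⟩ := h3 X Y n hn f
  obtain ⟨r, hr⟩ := chainComp_first Z g n (by omega)
  have hZ1 : (Z 1)⟦(-1:ℤ)⟧ ∈ t.heartSet :=
    heart_shift_congr t (hmem 1 (by omega)) (by norm_num)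
  obtain ⟨E, hE, e, he0, hcan⟩ := ext1Realize t X.property hZ1 (eqToHom h0.symm ≫ g 0)
  refine ⟨⟨E, hE⟩, ObjectProperty.homMk e, epi_of_cancel t _ hcan, ?_⟩
  have hfact : f = (eqToHom h0.symm ≫ g 0) ≫ (r ≫ eqToHom hn') := by
    rw [← hcomp, hr]; simp
  show e ≫ f = 0
  rw [hfact, ← Category.assoc, he0, zero_comp]

lemma cond3_to_cond2 (h3 : Cond3 t) : Cond2 t := by
  intro X Y n hn f
  obtain ⟨m, rfl⟩ : ∃ m, n = m + 1 := ⟨n - 1, by omega⟩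
  obtain ⟨Z, g, h0, hn', hmem, hcomp⟩ := h3 X Y (m+1) hn f
  have hB : (Z m)⟦(-(m:ℤ) : ℤ)⟧ ∈ t.heartSet := hmem m (by omega)
  set θ := shiftFunctorAdd' D ((m+1 : ℕ) : ℤ) (-(m:ℤ)) (1:ℤ) (by omega) with hθ
  obtain ⟨E, hE, m₁, hvan, hmc⟩ := monoRealize t Y.property hB
    ((g m ≫ eqToHom hn')⟦(-(m:ℤ))⟧' ≫ θ.inv.app Y.obj)
  refine ⟨⟨E, hE⟩, ObjectProperty.homMk m₁, mono_of_cancel t _ hmc, ?_⟩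
  have hlast : (g m ≫ eqToHom hn') ≫ m₁⟦((m+1 : ℕ) : ℤ)⟧' = 0 := by
    apply zero_shift (-(m:ℤ))
    rw [← cancel_mono (θ.inv.app E)]
    have hnat := θ.inv.naturality m₁
    rw [Functor.map_comp, Category.assoc, zero_comp]
    erw [hnat]
    rw [← Category.assoc]
    exact hvan
  have hf : f = eqToHom h0.symm ≫ chainComp Z g m ≫ (g m ≫ eqToHom hn') := by
    rw [← hcomp]; simp [Paper.chainComp]
  show f ≫ m₁⟦((m+1 : ℕ) : ℤ)⟧' = 0
  rw [hf]
  simp only [Category.assoc]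
  rw [← Category.assoc (g m), hlast]
  simp

lemma cond1_to_chain (h1 : Cond1 t) :
    ∀ n : ℕ, 1 ≤ n → ∀ (X Y : t.Heart) (f : X.obj ⟶ Y.obj⟦(n : ℤ)⟧), Chain t 0 n f := by
  intro n
  induction n with
  | zero => omega
  | succ n ih =>
    intro _ X Y f
    rcases Nat.eq_zero_or_pos n with h0 | hpos
    · subst h0
      exact .single 0 f (mem_heart_shift_zero t X.property _ (by norm_num))
        (mem_heart_shift₂ t Y.property _ _ (by omega))
    · obtain ⟨C, e, hEpi, hef⟩ := h1 X Y (n+1) (by omega) f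
      obtain ⟨K, hK, δ, hfactor⟩ := kernelRealize t C.property X.property
        e.hom (fun To hTo φ h => cancel_of_epi t e hEpi To hTo φ h)
      obtain ⟨k, hk⟩ := hfactor _ f hef
      have μ := shiftFunctorAdd' D ((n : ℕ) : ℤ) (1:ℤ) ((n+1 : ℕ) : ℤ) (by omega)
      obtain ⟨k', hk'⟩ := (shiftFunctor D (1:ℤ)).map_surjective (k ≫ μ.hom.app Y.obj)
      have hchain0 : Chain t 0 n k' := ih hpos ⟨K, hK⟩ Y k'
      have hchain1 := chain_iso_right t (chain_shift t hchain0) ((μ.app Y.obj).symm)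
      have hkey : k'⟦(1:ℤ)⟧' ≫ ((μ.app Y.obj).symm).hom = k := by
        rw [hk']
        simp
      rw [hkey] at hchain1
      have hc : Chain t 0 (n+1) (δ ≫ k) :=
        Chain.cons 0 n δ k (mem_heart_shift_zero t X.property _ (by norm_num)) hchain1
      rw [hk]
      exact hc

lemma cond2_to_chain (h2 : Cond2 t) :
    ∀ n : ℕ, 1 ≤ n → ∀ (X Y : t.Heart) (f : X.obj ⟶ Y.obj⟦(n : ℤ)⟧), Chain t 0 n f := by
  intro n
  induction n with
  | zero => omega
  | succ n ih =>
    intro _ X Y f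
    rcases Nat.eq_zero_or_pos n with h0 | hpos
    · subst h0
      exact .single 0 f (mem_heart_shift_zero t X.property _ (by norm_num))
        (mem_heart_shift₂ t Y.property _ _ (by omega))
    · obtain ⟨C, m₁, hMono, hvan⟩ := h2 X Y (n+1) (by omega) f
      obtain ⟨Q₀, hQ, π, hfactor⟩ := cokernelRealize t Y.property C.property
        m₁.hom (fun To hTo φ h => cancel_of_mono t m₁ hMono To hTo φ h)
      obtain ⟨f₀, hf₀⟩ := (shiftFunctor D ((n+1 : ℕ) : ℤ)).map_surjective
        ((shiftFunctorCompIsoId D (-((n+1 : ℕ) : ℤ)) ((n+1 : ℕ) : ℤ) (by ring)).hom.app X.obj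
          ≫ f)
      have hf₀m : f₀ ≫ m₁.hom = 0 := by
        apply zero_shift ((n+1 : ℕ) : ℤ)
        rw [Functor.map_comp, hf₀, Category.assoc, hvan, comp_zero]
      obtain ⟨u, hu⟩ := hfactor _ f₀ hf₀m
      have hfψ : f = (((shiftFunctorCompIsoId D (-((n+1 : ℕ) : ℤ)) ((n+1 : ℕ) : ℤ)
          (by ring)).inv.app X.obj ≫ u⟦((n+1 : ℕ) : ℤ)⟧') ≫ π⟦((n+1 : ℕ) : ℤ)⟧') := by
        rw [← cancel_epi ((shiftFunctorCompIsoId D (-((n+1 : ℕ) : ℤ)) ((n+1 : ℕ) : ℤ)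
          (by ring)).hom.app X.obj), ← hf₀, hu, Functor.map_comp]
        simp
      have e₄ := (shiftFunctorAdd' D (-1:ℤ) ((n+1 : ℕ) : ℤ) ((n : ℕ) : ℤ) (by omega)).app Q₀
      have hchain0 : Chain t 0 n
          ((((shiftFunctorCompIsoId D (-((n+1 : ℕ) : ℤ)) ((n+1 : ℕ) : ℤ) (by ring)).inv.app
            X.obj ≫ u⟦((n+1 : ℕ) : ℤ)⟧') ≫ e₄.inv)) :=
        ih hpos X ⟨Q₀, hQ⟩ _
      have hchain1 := chain_snoc t hchain0 (e₄.hom ≫ π⟦((n+1 : ℕ) : ℤ)⟧')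
        (mem_heart_shift₂ t Y.property ((n+1 : ℕ) : ℤ) _ (by omega))
      rw [hfψ]
      simpa using hchain1

lemma chain_to_cond3 (hc : ∀ n : ℕ, 1 ≤ n → ∀ (X Y : t.Heart)
    (f : X.obj ⟶ Y.obj⟦(n : ℤ)⟧), Chain t 0 n f) : Cond3 t := by
  intro X Y n hn f
  obtain ⟨Z, g, h0, hn', hmem, hcomp⟩ := chain_spec t (hc n (by omega) X Y f)
  exact ⟨Z, g, h0, hn', fun i hi => heart_shift_congr t (hmem i hi) (by ring), hcomp⟩

lemma cond1_to_cond3 (h1 : Cond1 t) : Cond3 t :=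
  chain_to_cond3 t (cond1_to_chain t h1)

lemma cond2_to_cond3 (h2 : Cond2 t) : Cond3 t :=
  chain_to_cond3 t (cond2_to_chain t h2)

end DEquiv

open Paper in
/-- For a t-structure `(U, V)` on `D^b(A)` with heart `H(U)`, the three
factorization conditions of Proposition 3.10 are equivalent. -/
theorem derived_equivalence_conditions_equivalent
    (A : Type u) [Category.{v} A] [Abelian A] [HasDerivedCategory.{w} A]
    (t : TStructureOn (DerivedCategory A) (Bdd A)) :
    ((∀ (X Y : t.Heart) (n : ℕ), 2 ≤ n → ∀ f : X.obj ⟶ Y.obj⟦(n : ℤ)⟧,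
        ∃ (C : t.Heart) (e : C ⟶ X), Epi e ∧ e.hom ≫ f = 0) ↔
     (∀ (X Y : t.Heart) (n : ℕ), 2 ≤ n → ∀ f : X.obj ⟶ Y.obj⟦(n : ℤ)⟧,
        ∃ (C : t.Heart) (m : Y ⟶ C), Mono m ∧
          f ≫ m.hom⟦(n : ℤ)⟧' = 0)) ∧
    ((∀ (X Y : t.Heart) (n : ℕ), 2 ≤ n → ∀ f : X.obj ⟶ Y.obj⟦(n : ℤ)⟧,
        ∃ (C : t.Heart) (m : Y ⟶ C), Mono m ∧
          f ≫ m.hom⟦(n : ℤ)⟧' = 0) ↔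
     (∀ (X Y : t.Heart) (n : ℕ), 2 ≤ n → ∀ f : X.obj ⟶ Y.obj⟦(n : ℤ)⟧,
        ∃ (Z : ℕ → DerivedCategory A) (g : ∀ i : ℕ, Z i ⟶ Z (i + 1)) (h0 : Z 0 = X.obj)
          (hn : Z n = Y.obj⟦(n : ℤ)⟧),
          (∀ i ≤ n, (Z i)⟦(-(i : ℤ))⟧ ∈ t.heartSet) ∧
            eqToHom h0.symm ≫ chainComp Z g n ≫ eqToHom hn = f)) := by
  exact ⟨⟨fun h1 => DEquiv.cond3_to_cond2 t (DEquiv.cond1_to_cond3 t h1),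
          fun h2 => DEquiv.cond3_to_cond1 t (DEquiv.cond2_to_cond3 t h2)⟩,
         ⟨fun h2 => DEquiv.cond2_to_cond3 t h2,
          fun h3 => DEquiv.cond3_to_cond2 t h3⟩⟩
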